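/- Let X be a reflexive real Banach space and let 𝕄 : X × X* → ℝ ∪ {+∞} be a convex, lower semicontinuous anti-selfdual Lagrangian, i.e. 𝕄*(p, x) = 𝕄(−x, −p) for all (x, p) ∈ X × X*, where 𝕄*(p, x) = sup_{(y,q) ∈ X × X*} (⟨p, y⟩ + ⟨q, x⟩ − 𝕄(y, q)). Assume there exists x₀ ∈ X such that p ↦ 𝕄(x₀, p) is bounded above on a neighborhood of the origin in X*. Then there exists x̄ ∈ X such that 𝕄(x̄, 0) = inf_{x ∈ X} 𝕄(x, 0) = 0 and (0, −x̄) ∈ ∂𝕄(x̄, 0), i.e. 𝕄(y, q) ≥ 𝕄(x̄, 0) + ⟨q, −x̄⟩ for all (y, q) ∈ X × X*. -/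

import Mathlib

open MeasureTheory Set Filter Topology

noncomputable section

/-- Convexity for extended-real-valued functions. -/
def ConvexEF {F : Type*} [AddCommMonoid F] [Module ℝ F] (f : F → EReal) : Prop :=
  ∀ x y : F, ∀ a b : ℝ, 0 ≤ a → 0 ≤ b → a + b = 1 →
    f (a • x + b • y) ≤ (a : EReal) * f x + (b : EReal) * f y

private lemma ereal_le_of_forall_real (a : ℝ) (b : EReal)
    (h : ∀ t : ℝ, b ≤ (t:EReal) → a ≤ t) : (a:EReal) ≤ b := by
  induction b with
  | bot => exfalso; have := h (a - 1) bot_le; linarith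
  | coe t => exact_mod_cast h t le_rfl
  | top => exact le_top

private lemma ereal_sub_le (a r : ℝ) (m : EReal) (h : ((r:ℝ):EReal) ≤ m) :
    (a:EReal) - m ≤ ((a - r : ℝ):EReal) := by
  rcases eq_or_ne m ⊤ with rfl|hne
  · simp [EReal.sub_top]
  · have hbot : m ≠ ⊥ := ne_bot_of_le_ne_bot (by simp) h
    obtain ⟨s, rfl⟩ : ∃ s : ℝ, m = (s:EReal) := ⟨m.toReal, (EReal.coe_toReal hne hbot).symm⟩
    rw [← EReal.coe_sub]
    have : r ≤ s := by exact_mod_cast h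
    exact_mod_cast (by linarith : a - s ≤ a - r)

/-- limit lemma: if `ε A + (1-ε) B < C` for all small positive `ε`, then `B ≤ C`. -/
private lemma limit_lemma (A B C : ℝ) (h : ∀ ε : ℝ, 0 < ε → ε < 1 → ε * A + (1 - ε) * B < C) :
    B ≤ C := by
  by_contra hc
  push_neg at hc
  set l := min (1/2) ((B - C)/(|A - B| + 1)) with hl_def
  have habs : (0:ℝ) < |A - B| + 1 := by positivity
  have hl : 0 < l := lt_min (by norm_num) (div_pos (by linarith) habs)
  have hl1 : l < 1 := lt_of_le_of_lt (min_le_left _ _) (by norm_num)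
  have h2 := h l hl hl1
  have hle : l ≤ (B - C)/(|A - B| + 1) := min_le_right _ _
  have h4 : l * (|A - B| + 1) ≤ B - C := by
    rw [← le_div_iff₀ habs]; exact hle
  nlinarith [mul_le_mul_of_nonneg_left (neg_abs_le (A - B)) hl.le]

set_option maxHeartbeats 1000000 in
/-- Basic minimization principle for anti-selfdual Lagrangians on a reflexive Banach
space: if `𝕄` is a convex lsc anti-selfdual Lagrangian on `X × X*` and `p ↦ 𝕄(x₀,p)`
is bounded above near `0 ∈ X*`, then there is `x̄` with
`𝕄(x̄,0) = inf 𝕄(·,0) = 0` and `(0,-x̄) ∈ ∂𝕄(x̄,0)`. -/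
theorem asd_minimization {X : Type*} [NormedAddCommGroup X] [NormedSpace ℝ X]
    (hrefl : Function.Surjective (NormedSpace.inclusionInDoubleDual ℝ X))
    (M : X → StrongDual ℝ X → EReal)
    (hconv : ConvexEF (fun z : X × StrongDual ℝ X => M z.1 z.2))
    (hlsc : LowerSemicontinuous (fun z : X × StrongDual ℝ X => M z.1 z.2))
    (hasd : ∀ (x : X) (f : StrongDual ℝ X),
      (⨆ y : X, ⨆ g : StrongDual ℝ X, ((f y + g x : ℝ) : EReal) - M y g) =
        M (-x) (-f))
    (x₀ : X)
    (hb : ∃ U ∈ nhds (0 : StrongDual ℝ X), ∃ c : ℝ, ∀ f ∈ U, M x₀ f ≤ (c : EReal)) :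
    ∃ xb : X, M xb 0 = 0 ∧ (∀ x : X, M xb 0 ≤ M x 0) ∧
      ∀ (y : X) (g : StrongDual ℝ X),
        M xb 0 + ((g (-xb) : ℝ) : EReal) ≤ M y g := by
  classical
  obtain ⟨U, hU, c, hc⟩ := hb
  have hVle : ∀ (x : X) (p : StrongDual ℝ X), (⨅ x' : X, M x' p) ≤ M x p :=
    fun x p => iInf_le _ x
  -- the strict epigraph of `p ↦ ⨅ x, M x p`
  set S : Set (StrongDual ℝ X × ℝ) := {z | ∃ x, M x z.1 < ((z.2 : ℝ) : EReal)} with hS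
  -- convexity of S
  have hSconv : Convex ℝ S := by
    rintro ⟨p, s⟩ ⟨x, hx⟩ ⟨q, t⟩ ⟨y, hy⟩ a b ha hb' hab
    rcases ha.eq_or_lt with rfl|hapos
    · have hb1 : b = 1 := by linarith
      subst hb1
      simpa using ⟨y, hy⟩
    rcases hb'.eq_or_lt with rfl|hbpos
    · have ha1 : a = 1 := by linarith
      subst ha1
      simpa using ⟨x, hx⟩
    obtain ⟨r₁, hr₁, hr₁'⟩ := EReal.exists_between_coe_real hx
    obtain ⟨r₂, hr₂, hr₂'⟩ := EReal.exists_between_coe_real hy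
    refine ⟨a • x + b • y, ?_⟩
    have h1 := hconv (x, p) (y, q) a b ha hb' hab
    simp only [Prod.smul_mk, Prod.mk_add_mk] at h1
    have h2 : (a : EReal) * M x p + (b : EReal) * M y q ≤ ((a * r₁ + b * r₂ : ℝ) : EReal) := by
      rw [EReal.coe_add, EReal.coe_mul, EReal.coe_mul]
      exact add_le_add (mul_le_mul_of_nonneg_left hr₁.le (by exact_mod_cast ha))
        (mul_le_mul_of_nonneg_left hr₂.le (by exact_mod_cast hb'))
    have hr₁s : r₁ < s := by exact_mod_cast hr₁'
    have hr₂t : r₂ < t := by exact_mod_cast hr₂'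
    have h3 : ((a * r₁ + b * r₂ : ℝ) : EReal) < ((a * s + b * t : ℝ) : EReal) := by
      exact_mod_cast add_lt_add (mul_lt_mul_of_pos_left hr₁s hapos)
        (mul_lt_mul_of_pos_left hr₂t hbpos)
    calc M (a • x + b • y) ((a • (p, s) + b • (q, t)).1)
        = M (a • x + b • y) (a • p + b • q) := by simp [Prod.smul_mk]
      _ ≤ (a : EReal) * M x p + (b : EReal) * M y q := h1
      _ ≤ _ := h2
      _ < _ := h3
      _ = (((a • (p, s) + b • (q, t)).2 : ℝ) : EReal) := by
          simp [Prod.smul_mk, smul_eq_mul]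
  -- interior points of S above c
  have hS0 : ∀ t : ℝ, c < t → ((0 : StrongDual ℝ X), t) ∈ interior S := by
    intro t ht
    have hsub : interior U ×ˢ Ioi c ⊆ S := by
      rintro ⟨p, r⟩ ⟨hp, hr⟩
      exact ⟨x₀, lt_of_le_of_lt (hc p (interior_subset hp))
        (EReal.coe_lt_coe_iff.mpr hr)⟩
    have hsub2 : interior U ×ˢ Ioi c ⊆ interior S :=
      interior_maximal hsub (isOpen_interior.prod isOpen_Ioi)
    exact hsub2 ⟨mem_interior_iff_mem_nhds.mpr hU, ht⟩
  -- basic anti-selfduality consequence at (0,0)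
  have hkey0 : ∀ x y : X, -(M y 0) ≤ M x 0 := by
    intro x y
    have h := hasd (-x) (0 : StrongDual ℝ X)
    rw [neg_neg, neg_zero] at h
    rw [← h]
    refine le_trans ?_ (le_iSup₂ (f := fun (y : X) (g : StrongDual ℝ X) =>
      (((0:StrongDual ℝ X) y + g (-x) : ℝ) : EReal) - M y g) y 0)
    simp
  have hV0_ge : -(⨅ x : X, M x 0) ≤ ⨅ x : X, M x 0 := by
    refine le_iInf fun x => ?_
    rw [EReal.neg_le]
    refine le_iInf fun y => ?_
    rw [EReal.neg_le]
    exact hkey0 x y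
  have hV0_ne_bot : (⨅ x : X, M x 0) ≠ ⊥ := by
    intro h
    rw [h] at hV0_ge
    simp at hV0_ge
  have hV0_le_c : (⨅ x : X, M x 0) ≤ (c : EReal) :=
    (hVle x₀ 0).trans (hc 0 (mem_of_mem_nhds hU))
  have hV0_ne_top : (⨅ x : X, M x 0) ≠ ⊤ := fun h => by rw [h] at hV0_le_c; simp at hV0_le_c
  obtain ⟨v, hv⟩ : ∃ v : ℝ, (⨅ x : X, M x 0) = (v : EReal) :=
    ⟨(⨅ x : X, M x 0).toReal, (EReal.coe_toReal hV0_ne_top hV0_ne_bot).symm⟩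
  have hv0 : 0 ≤ v := by
    rw [hv, ← EReal.coe_neg] at hV0_ge
    have : -v ≤ v := by exact_mod_cast hV0_ge
    linarith
  -- (0, v) is not in interior S
  have hnotin : ((0 : StrongDual ℝ X), v) ∉ interior S := by
    intro h
    obtain ⟨ε, hε, hball⟩ := Metric.isOpen_iff.1 isOpen_interior _ h
    have hd2 : dist (v - ε/2) v = ε/2 := by
      rw [Real.dist_eq, abs_of_nonpos (by linarith)]; ring
    have hd : dist (((0 : StrongDual ℝ X), v - ε/2)) ((0 : StrongDual ℝ X), v) < ε := by
      rw [Prod.dist_eq, dist_self, hd2]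
      exact max_lt hε (by linarith)
    obtain ⟨x, hx⟩ := interior_subset (hball hd)
    have h1 : (⨅ x' : X, M x' 0) ≤ M x 0 := hVle x 0
    rw [hv] at h1
    have h2 := lt_of_le_of_lt h1 hx
    have h3 : v < v - ε/2 := by exact_mod_cast h2
    linarith
  -- separation
  obtain ⟨f, hf⟩ := geometric_hahn_banach_open_point hSconv.interior isOpen_interior hnotin
  set β : ℝ := f ((0 : StrongDual ℝ X), (1 : ℝ)) with hβdef
  set φ : StrongDual ℝ X →L[ℝ] ℝ :=
    f.comp (ContinuousLinearMap.inl ℝ (StrongDual ℝ X) ℝ) with hφdef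
  have hfpt : ∀ (p : StrongDual ℝ X) (t : ℝ), f (p, t) = φ p + t * β := by
    intro p t
    have hsplit : (p, t) = ((p, 0) : StrongDual ℝ X × ℝ)
        + t • ((0 : StrongDual ℝ X), (1:ℝ)) := by
      simp [Prod.smul_mk]
    rw [hsplit, map_add, f.map_smul, smul_eq_mul]
    simp [hφdef, hβdef]
  have hft : ∀ t : ℝ, f ((0 : StrongDual ℝ X), t) = t * β := by
    intro t
    rw [hfpt]
    simp [hφdef]
    exact map_zero f
  set t₀ : ℝ := max c v + 1 with ht₀def
  have hz₀ : ((0 : StrongDual ℝ X), t₀) ∈ interior S := hS0 t₀ (by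
    have := le_max_left c v; simp only [ht₀def]; linarith)
  have hβ : β < 0 := by
    have h1 := hf _ hz₀
    rw [hft, hft] at h1
    have ht₀v : v < t₀ := by
      have := le_max_right c v; simp only [ht₀def]; linarith
    nlinarith
  -- f ≤ v β on all of S
  have hfS : ∀ z ∈ S, f z ≤ v * β := by
    intro z hz
    refine limit_lemma (f ((0:StrongDual ℝ X), t₀)) (f z) (v * β) fun l hl hl1 => ?_
    have hmem : l • ((0 : StrongDual ℝ X), t₀) + (1 - l) • z ∈ interior S :=
      hSconv.openSegment_interior_self_subset_interior hz₀ hz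
        ⟨l, 1 - l, hl, by linarith, by ring, rfl⟩
    have h1 := hf _ hmem
    rw [map_add, f.map_smul, f.map_smul, smul_eq_mul, smul_eq_mul, hft v] at h1
    exact h1
  -- affine minorant of the value function
  have hfz : ∀ (p : StrongDual ℝ X) (t : ℝ),
      (⨅ x : X, M x p) ≤ (t : EReal) → φ p + t * β ≤ v * β := by
    intro p t ht
    have hδ : ∀ δ : ℝ, 0 < δ → φ p + (t + δ) * β ≤ v * β := by
      intro δ hδpos
      have hlt : (⨅ x : X, M x p) < (((t + δ : ℝ)) : EReal) :=
        lt_of_le_of_lt ht (EReal.coe_lt_coe_iff.mpr (by linarith))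
      obtain ⟨x, hx⟩ := iInf_lt_iff.mp hlt
      have h1 := hfS (p, t + δ) ⟨x, hx⟩
      rwa [hfpt] at h1
    by_contra hcon
    push_neg at hcon
    set δ : ℝ := (φ p + t * β - v * β) / (-2 * β) with hδdef
    have h2β : (0:ℝ) < -2 * β := by linarith
    have hδpos : 0 < δ := div_pos (by linarith) h2β
    have hδβ : δ * (-2 * β) = φ p + t * β - v * β := div_mul_cancel₀ _ (ne_of_gt h2β)
    have := hδ δ hδpos
    nlinarith
  -- the reflexivity step
  obtain ⟨xb0, hxb0⟩ := hrefl ((-β)⁻¹ • φ)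
  have hψ : ∀ p : StrongDual ℝ X, p xb0 = (-β)⁻¹ * φ p := by
    intro p
    have h1 := NormedSpace.dual_def ℝ X xb0 p
    rw [hxb0] at h1
    rw [← h1]
    simp
  -- subgradient inequality
  have hsubgrad : ∀ (x : X) (p : StrongDual ℝ X),
      ((v + p xb0 : ℝ) : EReal) ≤ M x p := by
    intro x p
    refine ereal_le_of_forall_real _ _ fun t ht => ?_
    have hVt : (⨅ x' : X, M x' p) ≤ (t : EReal) := (hVle x p).trans ht
    have h1 := hfz p t hVt
    rw [hψ p]
    have hβ' : (0:ℝ) < -β := by linarith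
    have h2 : φ p ≤ (v - t) * β := by nlinarith
    have h3 : (-β)⁻¹ * φ p ≤ (-β)⁻¹ * ((v - t) * β) :=
      mul_le_mul_of_nonneg_left h2 (inv_nonneg.mpr hβ'.le)
    have h4 : (-β)⁻¹ * ((v - t) * β) = t - v := by
      field_simp
      rw [mul_div_cancel_left₀ _ hβ.ne]
      ring
    linarith [h3.trans_eq h4]
  -- the value at (-xb0, 0) is at most -v
  have hMxb_le : M (-xb0) 0 ≤ ((-v : ℝ) : EReal) := by
    have h := hasd xb0 (0 : StrongDual ℝ X)
    rw [neg_zero] at h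
    rw [← h]
    refine iSup_le fun y => iSup_le fun g => ?_
    have h2 : ((v + g xb0 : ℝ) : EReal) ≤ M y g := hsubgrad y g
    have h3 : (((0:StrongDual ℝ X) y + g xb0 : ℝ) : EReal) - M y g
        ≤ ((((0:StrongDual ℝ X) y + g xb0 : ℝ) - (v + g xb0)) : EReal) :=
      ereal_sub_le _ _ _ h2
    refine h3.trans ?_
    exact_mod_cast (by simp : ((0:StrongDual ℝ X) y + g xb0 : ℝ) - (v + g xb0) ≤ -v)
  have hv_le : v ≤ -v := by
    have h1 : (v : EReal) ≤ M (-xb0) 0 := hv ▸ hVle (-xb0) 0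
    exact_mod_cast h1.trans hMxb_le
  have hveq : v = 0 := le_antisymm (by linarith) hv0
  have hMeq : M (-xb0) 0 = 0 := by
    apply le_antisymm
    · have h1 := hMxb_le
      rw [hveq] at h1
      simpa using h1
    · have h1 : (v : EReal) ≤ M (-xb0) 0 := hv ▸ hVle (-xb0) 0
      rw [hveq] at h1
      simpa using h1
  refine ⟨-xb0, hMeq, ?_, ?_⟩
  · intro x
    rw [hMeq]
    have h1 : (v : EReal) ≤ M x 0 := hv ▸ hVle x 0
    rw [hveq] at h1
    simpa using h1
  · intro y g
    rw [hMeq, zero_add, neg_neg]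
    have h1 := hsubgrad y g
    rw [hveq, zero_add] at h1
    exact h1
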